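/- For all integers 1 ≤ d ≤ n-1 and 0 ≤ a ≤ d-1, one has C(n-1,d) * ∑_{j=0}^{d} (-1)^j * C(d-a,j) * C(n-d+a, d-j) / C(n-1, d-j) = 0, and for a = d the same sum equals C(n,d). -/

import Mathlib

open Finset

private lemma diff_step (N : ℕ) (f : ℕ → ℚ) :
    ∑ j ∈ Finset.range (N + 2), (-1 : ℚ) ^ j * ((N + 1).choose j : ℚ) * f j
      = ∑ j ∈ Finset.range (N + 1), (-1 : ℚ) ^ j * (N.choose j : ℚ) * (f j - f (j + 1)) := by
  have h2 : ∑ j ∈ Finset.range (N + 2), (-1 : ℚ) ^ j * (N.choose j : ℚ) * f j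
      = (∑ j ∈ Finset.range (N + 1), (-1 : ℚ) ^ (j + 1) * (N.choose (j + 1) : ℚ) * f (j + 1))
        + f 0 := by
    rw [Finset.sum_range_succ']; simp
  have h3 : ∑ j ∈ Finset.range (N + 2), (-1 : ℚ) ^ j * (N.choose j : ℚ) * f j
      = ∑ j ∈ Finset.range (N + 1), (-1 : ℚ) ^ j * (N.choose j : ℚ) * f j := by
    rw [Finset.sum_range_succ, Nat.choose_succ_self]; simp
  rw [Finset.sum_range_succ']
  have h4 : ∀ j ∈ Finset.range (N + 1),
      (-1 : ℚ) ^ (j + 1) * ((N + 1).choose (j + 1) : ℚ) * f (j + 1)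
        = (-1 : ℚ) ^ (j + 1) * (N.choose j : ℚ) * f (j + 1)
          + (-1 : ℚ) ^ (j + 1) * (N.choose (j + 1) : ℚ) * f (j + 1) := by
    intro j _
    rw [Nat.choose_succ_succ]
    push_cast
    ring
  rw [Finset.sum_congr rfl h4, Finset.sum_add_distrib]
  have h5 : (∑ j ∈ Finset.range (N + 1), (-1 : ℚ) ^ (j + 1) * (N.choose (j + 1) : ℚ) * f (j + 1))
      + ((-1 : ℚ) ^ 0 * ((N + 1).choose 0 : ℚ) * f 0)
      = ∑ j ∈ Finset.range (N + 1), (-1 : ℚ) ^ j * (N.choose j : ℚ) * f j := by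
    rw [← h3, h2]; simp
  have := h5
  rw [add_assoc, h5, ← Finset.sum_add_distrib]
  apply Finset.sum_congr rfl
  intro j _
  ring

private lemma alt_vanish : ∀ (N r : ℕ), r < N → ∀ c : ℚ,
    ∑ j ∈ Finset.range (N + 1), (-1 : ℚ) ^ j * (N.choose j : ℚ)
      * ∏ t ∈ Finset.range r, (c + j + t) = 0 := by
  intro N
  induction N with
  | zero => intro r hr; omega
  | succ N ih =>
    intro r hr c
    rw [show N + 1 + 1 = N + 2 from rfl] at *
    rw [diff_step N (fun j => ∏ t ∈ Finset.range r, (c + j + t))]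
    cases r with
    | zero => simp
    | succ s =>
      have key : ∀ j : ℕ,
          ((∏ t ∈ Finset.range (s + 1), (c + (j : ℚ) + t))
            - ∏ t ∈ Finset.range (s + 1), (c + ((j + 1 : ℕ) : ℚ) + t))
          = -((s : ℚ) + 1) * ∏ t ∈ Finset.range s, ((c + 1) + j + t) := by
        intro j
        have hA : (∏ t ∈ Finset.range (s + 1), (c + (j : ℚ) + t))
            = (∏ t ∈ Finset.range s, ((c + 1) + j + t)) * (c + j) := by
          rw [Finset.prod_range_succ']
          congr 1
          · apply Finset.prod_congr rfl; intro t _; push_cast; ring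
          · push_cast; ring
        have hB : (∏ t ∈ Finset.range (s + 1), (c + ((j + 1 : ℕ) : ℚ) + t))
            = (∏ t ∈ Finset.range s, ((c + 1) + j + t)) * (c + j + s + 1) := by
          rw [Finset.prod_range_succ]
          congr 1
          · apply Finset.prod_congr rfl; intro t _; push_cast; ring
          · push_cast; ring
        rw [hA, hB]; ring
      calc ∑ j ∈ Finset.range (N + 1), (-1 : ℚ) ^ j * (N.choose j : ℚ)
            * ((∏ t ∈ Finset.range (s + 1), (c + (j : ℚ) + t))
              - ∏ t ∈ Finset.range (s + 1), (c + ((j + 1 : ℕ) : ℚ) + t))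
          = -((s : ℚ) + 1) * ∑ j ∈ Finset.range (N + 1), (-1 : ℚ) ^ j * (N.choose j : ℚ)
            * ∏ t ∈ Finset.range s, ((c + 1) + j + t) := by
            rw [Finset.mul_sum]
            apply Finset.sum_congr rfl
            intro j _
            rw [key j]
            ring
        _ = 0 := by rw [ih s (by omega) (c + 1)]; ring

private lemma prod_id (b k m : ℕ) (hbm : b ≤ m) :
    (b.choose k : ℚ) * ∏ i ∈ Finset.Ico (b + 1) (m + 1), (i : ℚ)
      = (m.choose k : ℚ) * ∏ i ∈ Finset.Ico (b + 1) (m + 1), ((i : ℚ) - k) := by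
  induction m, hbm using Nat.le_induction with
  | base => simp
  | succ m hbm ih =>
    have e1 : (∏ i ∈ Finset.Ico (b + 1) (m + 1 + 1), (i : ℚ))
        = (∏ i ∈ Finset.Ico (b + 1) (m + 1), (i : ℚ)) * ((m + 1 : ℕ) : ℚ) :=
      Finset.prod_Ico_succ_top (by omega) _
    have e2 : (∏ i ∈ Finset.Ico (b + 1) (m + 1 + 1), ((i : ℚ) - k))
        = (∏ i ∈ Finset.Ico (b + 1) (m + 1), ((i : ℚ) - k)) * (((m + 1 : ℕ) : ℚ) - k) :=
      Finset.prod_Ico_succ_top (by omega) _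
    rw [e1, e2]
    have hstep : (m.choose k : ℚ) * ((m : ℚ) + 1)
        = ((m + 1).choose k : ℚ) * (((m : ℚ) + 1) - k) := by
      rcases le_or_gt k (m + 1) with hk | hk
      · have h1 : (m.choose k * (m + 1) : ℕ) = (m + 1).choose k * (m + 1 - k) :=
          Nat.choose_mul_succ_eq m k
        have h2 : ((m + 1 - k : ℕ) : ℚ) = (m : ℚ) + 1 - k := by
          rw [Nat.cast_sub hk]; push_cast; ring
        calc (m.choose k : ℚ) * ((m : ℚ) + 1)
            = ((m.choose k * (m + 1) : ℕ) : ℚ) := by push_cast; ring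
          _ = (((m + 1).choose k * (m + 1 - k) : ℕ) : ℚ) := by rw [h1]
          _ = ((m + 1).choose k : ℚ) * ((m : ℚ) + 1 - k) := by push_cast [h2]; ring
      · rw [Nat.choose_eq_zero_of_lt (by omega), Nat.choose_eq_zero_of_lt (by omega)]
        simp
    push_cast
    linear_combination ((m : ℚ) + 1) * ih
      + (∏ i ∈ Finset.Ico (b + 1) (m + 1), ((i : ℚ) - k)) * hstep

/-- The binomial identity of Lemma 2.2:
C(n-1,d) · ∑_{j=0}^d (-1)^j C(d-a,j) C(n-d+a,d-j) / C(n-1,d-j) equals C(n,d) for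
a = d and equals 0 for 0 ≤ a ≤ d-1, whenever 1 ≤ d ≤ n-1. -/
theorem binomial_identity (n d a : ℕ) (hd : 1 ≤ d) (hdn : d ≤ n - 1) (ha : a ≤ d) :
    ((n - 1).choose d : ℚ) *
      ∑ j ∈ Finset.range (d + 1),
        (-1 : ℚ) ^ j * ((d - a).choose j : ℚ) * ((n - d + a).choose (d - j) : ℚ) /
          ((n - 1).choose (d - j) : ℚ)
    = if a = d then (n.choose d : ℚ) else 0 := by
  obtain ⟨m, rfl⟩ : ∃ m, n = m + 1 := ⟨n - 1, by omega⟩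
  have hdm : d ≤ m := by omega
  simp only [Nat.add_sub_cancel]
  by_cases had : a = d
  · subst had
    rw [if_pos rfl]
    have hsum : ∑ j ∈ Finset.range (a + 1),
        (-1 : ℚ) ^ j * ((a - a).choose j : ℚ) * ((m + 1 - a + a).choose (a - j) : ℚ) /
          (m.choose (a - j) : ℚ)
        = ((m + 1).choose a : ℚ) / (m.choose a : ℚ) := by
      rw [Finset.sum_eq_single 0]
      · simp [show m + 1 - a + a = m + 1 by omega]
      · intro j hj hne
        rw [Nat.sub_self, Nat.choose_eq_zero_of_lt (Nat.pos_of_ne_zero hne)]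
        simp
      · simp
    rw [hsum]
    have h0 : (m.choose a : ℚ) ≠ 0 := by
      exact_mod_cast (Nat.choose_pos hdm).ne'
    field_simp
  · rw [if_neg had]
    set N := d - a with hN
    have hN1 : 1 ≤ N := by omega
    set b := m + 1 - d + a with hb
    have hbm : b ≤ m := by omega
    set c : ℚ := (b : ℚ) + 1 - d with hc
    set D := ∏ i ∈ Finset.Ico (b + 1) (m + 1), (i : ℚ) with hD
    have hDne : D ≠ 0 := by
      rw [hD]
      apply Finset.prod_ne_zero_iff.mpr
      intro i hi
      have hi' : 0 < i := by have := Finset.mem_Ico.mp hi; omega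
      exact Nat.cast_ne_zero.mpr (by omega)
    rw [Finset.mul_sum]
    have trans : ∀ j ∈ Finset.range (d + 1),
        (m.choose d : ℚ) * ((-1 : ℚ) ^ j * (N.choose j : ℚ) * (b.choose (d - j) : ℚ) /
          (m.choose (d - j) : ℚ))
        = ((m.choose d : ℚ) / D) * ((-1 : ℚ) ^ j * (N.choose j : ℚ)
            * ∏ t ∈ Finset.range (N - 1), (c + j + t)) := by
      intro j hj
      have hjd : j ≤ d := Nat.lt_succ_iff.mp (Finset.mem_range.mp hj)
      have hkm : d - j ≤ m := by omega
      have hZ : (m.choose (d - j) : ℚ) ≠ 0 := by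
        exact_mod_cast (Nat.choose_pos hkm).ne'
      have hpi := prod_id b (d - j) m hbm
      have hP : (∏ i ∈ Finset.Ico (b + 1) (m + 1), ((i : ℚ) - ((d - j : ℕ) : ℚ)))
          = ∏ t ∈ Finset.range (N - 1), (c + j + t) := by
        rw [Finset.prod_Ico_eq_prod_range]
        rw [show m + 1 - (b + 1) = N - 1 by omega]
        apply Finset.prod_congr rfl
        intro t _
        have hcast : ((d - j : ℕ) : ℚ) = (d : ℚ) - j := by
          rw [Nat.cast_sub hjd]
        rw [hcast, hc]
        push_cast
        ring
      rw [hP, ← hD] at hpi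
      field_simp
      linear_combination ((m.choose d : ℚ) * (N.choose j : ℚ)) * hpi
    rw [Finset.sum_congr rfl trans, ← Finset.mul_sum]
    have hsub : Finset.range (N + 1) ⊆ Finset.range (d + 1) :=
      Finset.range_subset_range.mpr (by omega)
    have hzero : ∑ j ∈ Finset.range (d + 1), (-1 : ℚ) ^ j * (N.choose j : ℚ)
        * ∏ t ∈ Finset.range (N - 1), (c + j + t) = 0 := by
      have heq := Finset.sum_subset hsub (f := fun j => (-1 : ℚ) ^ j * (N.choose j : ℚ)
        * ∏ t ∈ Finset.range (N - 1), (c + j + t)) ?_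
      · rw [← heq]
        exact alt_vanish N (N - 1) (by omega) c
      · intro x hx hnx
        have hlt : N < x := by
          simp only [Finset.mem_range] at hnx
          omega
        simp [Nat.choose_eq_zero_of_lt hlt]
    rw [hzero, mul_zero]
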